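/- Let G = (V, E) be a finite simple graph with n vertices and m edges, with a fixed orientation assigning to each edge e = uv an ordered pair of its endpoints, and let k be a positive integer. Let G′ = (V′, E′) be the graph constructed from G as follows: replace each vertex u ∈ V by a path u₁u₂u₃ on three new vertices; for each edge e = uv ∈ E introduce four new vertices e_u, e_v, e_w, e_z and the edges e_u e_v, e_v e_w, e_w e_u, e_w e_z; and add the edges u₃ e_u and v₃ e_v. If G has a vertex cover of size at most n − k, then G′ has a vertex cover of size at most 2n + 2m − k. -/
import Mathlib


/-- The generating relation of the graph `G′` built from `G` (with an orientation given by
`fst`/`snd`): each vertex `u` is replaced by a path `u₁u₂u₃` (the vertices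
`Sum.inl (u, 0)`, `Sum.inl (u, 1)`, `Sum.inl (u, 2)`); each edge `e = uv` gets a gadget on
`e_u = Sum.inr (e, 0)`, `e_v = Sum.inr (e, 1)`, `e_w = Sum.inr (e, 2)`,
`e_z = Sum.inr (e, 3)` with edges `e_u e_v, e_v e_w, e_w e_u, e_w e_z`; and the edges
`u₃ e_u` and `v₃ e_v` are added, where `u = fst e` and `v = snd e`. -/
def vcu2Rel {V : Type*} (G : SimpleGraph V) (fst snd : Sym2 V → V) :
    ((V × Fin 3) ⊕ (↥G.edgeSet × Fin 4)) → ((V × Fin 3) ⊕ (↥G.edgeSet × Fin 4)) → Prop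
  | Sum.inl (u, i), Sum.inl (w, j) => u = w ∧ ((i = 0 ∧ j = 1) ∨ (i = 1 ∧ j = 2))
  | Sum.inr (e, i), Sum.inr (f, j) =>
      e = f ∧ ((i = 0 ∧ j = 1) ∨ (i = 1 ∧ j = 2) ∨ (i = 2 ∧ j = 0) ∨ (i = 2 ∧ j = 3))
  | Sum.inl (u, i), Sum.inr (e, j) =>
      i = 2 ∧ ((j = 0 ∧ fst e.val = u) ∨ (j = 1 ∧ snd e.val = u))
  | _, _ => False

/-- The graph `G′` constructed from `G` and the orientation `fst`/`snd`. -/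
def vcu2Graph {V : Type*} (G : SimpleGraph V) (fst snd : Sym2 V → V) :
    SimpleGraph ((V × Fin 3) ⊕ (↥G.edgeSet × Fin 4)) :=
  SimpleGraph.fromRel (vcu2Rel G fst snd)

/-- If `G` (finite, `n` vertices, `m` edges, with a fixed orientation
`fst`/`snd` of its edges) has a vertex cover of size at most `n − k`, then `G′` has a
vertex cover of size at most `2n + 2m − k`. -/
theorem stmt_17 {V : Type*} [Fintype V] (G : SimpleGraph V) (fst snd : Sym2 V → V)
    (horient : ∀ e ∈ G.edgeSet, e = s(fst e, snd e)) (k : ℕ) (hk : 0 < k)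
    (hcover : ∃ C : Set V, (∀ ⦃u v : V⦄, G.Adj u v → u ∈ C ∨ v ∈ C) ∧
      (C.ncard : ℤ) ≤ (Fintype.card V : ℤ) - k) :
    ∃ C' : Set ((V × Fin 3) ⊕ (↥G.edgeSet × Fin 4)),
      (∀ ⦃x y⦄, (vcu2Graph G fst snd).Adj x y → x ∈ C' ∨ y ∈ C') ∧
      (C'.ncard : ℤ) ≤ 2 * (Fintype.card V : ℤ) + 2 * (G.edgeSet.ncard : ℤ) - k := by
  classical
  obtain ⟨C, hC, hCcard⟩ := hcover
  let pick : ↥G.edgeSet → Fin 4 := fun e => if fst e.val ∈ C then 1 else 0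
  let A : Set ((V × Fin 3) ⊕ (↥G.edgeSet × Fin 4)) :=
    (fun u => Sum.inl (u, (1 : Fin 3))) '' Set.univ
  let B : Set ((V × Fin 3) ⊕ (↥G.edgeSet × Fin 4)) :=
    (fun u => Sum.inl (u, (2 : Fin 3))) '' C
  let D : Set ((V × Fin 3) ⊕ (↥G.edgeSet × Fin 4)) :=
    (fun e => Sum.inr (e, (2 : Fin 4))) '' Set.univ
  let E : Set ((V × Fin 3) ⊕ (↥G.edgeSet × Fin 4)) :=
    (fun e => Sum.inr (e, pick e)) '' Set.univ
  refine ⟨A ∪ B ∪ D ∪ E, ?_, ?_⟩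
  · have h1 : ∀ u, Sum.inl (u, (1 : Fin 3)) ∈ A ∪ B ∪ D ∪ E :=
      fun u => Or.inl (Or.inl (Or.inl ⟨u, trivial, rfl⟩))
    have h2 : ∀ u ∈ C, Sum.inl (u, (2 : Fin 3)) ∈ A ∪ B ∪ D ∪ E :=
      fun u hu => Or.inl (Or.inl (Or.inr ⟨u, hu, rfl⟩))
    have h3 : ∀ e, (Sum.inr (e, (2 : Fin 4)) : (V × Fin 3) ⊕ (↥G.edgeSet × Fin 4)) ∈ A ∪ B ∪ D ∪ E :=
      fun e => Or.inl (Or.inr ⟨e, trivial, rfl⟩)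
    have h4 : ∀ e, (Sum.inr (e, pick e) : (V × Fin 3) ⊕ (↥G.edgeSet × Fin 4)) ∈ A ∪ B ∪ D ∪ E :=
      fun e => Or.inr ⟨e, trivial, rfl⟩
    have hadj : ∀ e : ↥G.edgeSet, fst e.val ∈ C ∨ snd e.val ∈ C := by
      intro e
      have he := horient e.val e.2
      have : G.Adj (fst e.val) (snd e.val) := by
        rw [← SimpleGraph.mem_edgeSet, ← he]; exact e.2
      exact hC this
    intro x y hxy
    rw [vcu2Graph, SimpleGraph.fromRel_adj] at hxy
    obtain ⟨hne, h⟩ := hxy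
    -- helper to handle one direction of the relation
    have key : ∀ a b, vcu2Rel G fst snd a b → a ∈ A ∪ B ∪ D ∪ E ∨ b ∈ A ∪ B ∪ D ∪ E := by
      intro a b hab
      rcases a with ⟨u, i⟩ | ⟨e, i⟩ <;> rcases b with ⟨w, j⟩ | ⟨f, j⟩ <;>
        simp only [vcu2Rel] at hab
      · obtain ⟨rfl, ⟨rfl, rfl⟩ | ⟨rfl, rfl⟩⟩ := hab
        · exact Or.inr (h1 u)
        · exact Or.inl (h1 u)
      · obtain ⟨rfl, ⟨rfl, hf⟩ | ⟨rfl, hs⟩⟩ := hab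
        · by_cases hc : u ∈ C
          · exact Or.inl (h2 u hc)
          · have : pick f = 0 := by simp [pick, hf, hc]
            refine Or.inr ?_
            rw [show (0 : Fin 4) = pick f from this.symm]
            exact h4 f
        · by_cases hc : fst f.val ∈ C
          · have : pick f = 1 := by simp [pick, hc]
            refine Or.inr ?_
            rw [show (1 : Fin 4) = pick f from this.symm]
            exact h4 f
          · have hu : u ∈ C := by
              rcases hadj f with h' | h'
              · exact absurd h' hc
              · rwa [hs] at h'
            exact Or.inl (h2 u hu)
      · obtain ⟨rfl, ⟨rfl, rfl⟩ | ⟨rfl, rfl⟩ | ⟨rfl, rfl⟩ | ⟨rfl, rfl⟩⟩ := hab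
        · by_cases hc : fst e.val ∈ C
          · have : pick e = 1 := by simp [pick, hc]
            refine Or.inr ?_
            rw [show (1 : Fin 4) = pick e from this.symm]
            exact h4 e
          · have : pick e = 0 := by simp [pick, hc]
            refine Or.inl ?_
            rw [show (0 : Fin 4) = pick e from this.symm]
            exact h4 e
        · exact Or.inr (h3 e)
        · exact Or.inl (h3 e)
        · exact Or.inl (h3 e)
    rcases h with h | h
    · exact key x y h
    · exact (key y x h).symm
  · have hfin : (Set.univ : Set V).Finite := Set.finite_univ
    have hCfin : C.Finite := Set.toFinite C
    have hmA : A.ncard ≤ Fintype.card V := by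
      calc A.ncard ≤ (Set.univ : Set V).ncard := Set.ncard_image_le
        _ = Fintype.card V := by rw [Set.ncard_univ, Nat.card_eq_fintype_card]
    have hmB : B.ncard ≤ C.ncard := Set.ncard_image_le
    have hmD : D.ncard ≤ G.edgeSet.ncard := by
      calc D.ncard ≤ (Set.univ : Set ↥G.edgeSet).ncard := Set.ncard_image_le
        _ = G.edgeSet.ncard := by rw [Set.ncard_univ, Nat.card_coe_set_eq]
    have hmE : E.ncard ≤ G.edgeSet.ncard := by
      calc E.ncard ≤ (Set.univ : Set ↥G.edgeSet).ncard := Set.ncard_image_le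
        _ = G.edgeSet.ncard := by rw [Set.ncard_univ, Nat.card_coe_set_eq]
    have hU : (A ∪ B ∪ D ∪ E).ncard ≤ A.ncard + B.ncard + D.ncard + E.ncard := by
      calc (A ∪ B ∪ D ∪ E).ncard ≤ (A ∪ B ∪ D).ncard + E.ncard := Set.ncard_union_le _ _
        _ ≤ (A ∪ B).ncard + D.ncard + E.ncard := by
            have := Set.ncard_union_le (A ∪ B) D; omega
        _ ≤ A.ncard + B.ncard + D.ncard + E.ncard := by
            have := Set.ncard_union_le A B; omega
    have : ((A ∪ B ∪ D ∪ E).ncard : ℤ) ≤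
        (Fintype.card V : ℤ) + C.ncard + G.edgeSet.ncard + G.edgeSet.ncard := by
      push_cast; omega
    linarith
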